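/- Conversely, if the map κ_μ : L^∞(ν) → π_T(X)′ associated to a CP-measure space (S,F,μ) with barycenter T is a *-homomorphism, then for every Δ ∈ F the maps μ(Δ) and μ(Δᶜ) are orthogonal, i.e. κ_μ(χ_Δ) and κ_μ(χ_{Δᶜ}) are mutually orthogonal projections summing to the identity. -/

import Mathlib

open scoped ComplexOrder InnerProductSpace

noncomputable section

/-- A matrix over a star ring is positive if it is of the form `Nᴴ * N`. -/
def MatPos {A : Type*} [Ring A] [StarRing A] {n : ℕ}
    (M : Matrix (Fin n) (Fin n) A) : Prop :=
  ∃ N : Matrix (Fin n) (Fin n) A, M = N.conjTranspose * N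

/-- `T` is completely positive if the induced entrywise maps on matrices are positive. -/
def CompletelyPositiveFun {A B : Type*} [Ring A] [StarRing A] [Ring B] [StarRing B]
    (T : A → B) : Prop :=
  ∀ (n : ℕ) (M : Matrix (Fin n) (Fin n) A), MatPos M → MatPos (M.map T)

/-- `(π, K, V)` is a Stinespring representation of `T : X → B(H)`:
`T x = V* (π x) V` for all `x`. -/
def IsStinespring {X : Type*} [NormedRing X] [StarRing X] [CStarRing X]
    [NormedAlgebra ℂ X] [StarModule ℂ X]
    {H K : Type*} [NormedAddCommGroup H] [InnerProductSpace ℂ H] [CompleteSpace H]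
    [NormedAddCommGroup K] [InnerProductSpace ℂ K] [CompleteSpace K]
    (T : X → (H →L[ℂ] H)) (π : X →⋆ₐ[ℂ] (K →L[ℂ] K)) (V : H →L[ℂ] K) : Prop :=
  ∀ x : X, T x = (ContinuousLinearMap.adjoint V).comp ((π x).comp V)

/-- Minimality: the closed linear span of `π(X) V H` is all of `K`. -/
def IsMinimalStinespring {X : Type*} [NormedRing X] [StarRing X] [CStarRing X]
    [NormedAlgebra ℂ X] [StarModule ℂ X]
    {H K : Type*} [NormedAddCommGroup H] [InnerProductSpace ℂ H] [CompleteSpace H]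
    [NormedAddCommGroup K] [InnerProductSpace ℂ K] [CompleteSpace K]
    (π : X →⋆ₐ[ℂ] (K →L[ℂ] K)) (V : H →L[ℂ] K) : Prop :=
  (Submodule.span ℂ {k : K | ∃ (x : X) (h : H), k = π x (V h)}).topologicalClosure = ⊤

open MeasureTheory

section CPMeasure

variable {X : Type*} [NormedRing X] [StarRing X] [CStarRing X]
  [NormedAlgebra ℂ X] [StarModule ℂ X]
variable {H K : Type*} [NormedAddCommGroup H] [InnerProductSpace ℂ H] [CompleteSpace H]
  [NormedAddCommGroup K] [InnerProductSpace ℂ K] [CompleteSpace K]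
variable {S : Type*} [MeasurableSpace S]

/-- `μ` is a CP-measure on `(S, F)` with values in the von Neumann algebra `M`:
each `μ(Δ)` is a CP map from `X` into `M`, and `μ` is countably additive in the weak
sense (against all vector functionals, hence against all normal functionals). -/
def IsCPMeasure (M : VonNeumannAlgebra H) (μ : Set S → X → (H →L[ℂ] H)) : Prop :=
  (∀ Δ : Set S, MeasurableSet Δ →
      IsLinearMap ℂ (μ Δ) ∧ CompletelyPositiveFun (μ Δ) ∧ ∀ x : X, μ Δ x ∈ M) ∧
  (∀ Δ : ℕ → Set S, (∀ i, MeasurableSet (Δ i)) → Pairwise (Function.onFun Disjoint Δ) →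
    ∀ (x : X) (ξ η : H), ⟪ξ, μ (⋃ i, Δ i) x η⟫_ℂ = ∑' i, ⟪ξ, μ (Δ i) x η⟫_ℂ)

/-- The sequence `e` with `∑ ‖e n‖² = 1` determines the normal state
`ρ(A) = ∑ₙ ⟨e n, A (e n)⟩` on `B(H)`; faithfulness on `M` is required. -/
def IsNormalFaithfulStateOn (M : VonNeumannAlgebra H) (e : ℕ → H) : Prop :=
  (∑' n, (‖e n‖ : ℝ) ^ 2 = 1) ∧
  ∀ A : H →L[ℂ] H, A ∈ M → A.IsPositive → (∑' n, ⟪e n, A (e n)⟫_ℂ) = 0 → A = 0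

/-- `ν` is equivalent (mutually absolutely continuous) to the scalar measure
`ρ ∘ μ : Δ ↦ ∑ₙ ⟨e n, μ(Δ)(1) (e n)⟩`. -/
def IsEquivalentBaseMeasure (μ : Set S → X → (H →L[ℂ] H)) (e : ℕ → H)
    (ν : Measure S) : Prop :=
  ∀ Δ : Set S, MeasurableSet Δ → (ν Δ = 0 ↔ (∑' n, ⟪e n, μ Δ 1 (e n)⟫_ℂ) = 0)

/-- `R` satisfies the defining property of `κ_μ(f)`: for every vector functional
`⟨ξ, · η⟩`, every `x ∈ X`, and every `ν`-density `g` of the complex measure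
`Δ ↦ ⟨ξ, μ(Δ)(x) η⟩`, one has `⟨ξ, (V* R π(x) V) η⟩ = ∫ f g dν`, i.e. weakly
`V* R π(x) V = ∫ f(s) dμ(s, x)`. -/
def IsKappa (μ : Set S → X → (H →L[ℂ] H)) (ν : Measure S)
    (π : X →⋆ₐ[ℂ] (K →L[ℂ] K)) (V : H →L[ℂ] K) (f : S → ℂ) (R : K →L[ℂ] K) : Prop :=
  ∀ (x : X) (ξ η : H) (g : S → ℂ), Integrable g ν →
    (∀ Δ : Set S, MeasurableSet Δ → ⟪ξ, μ Δ x η⟫_ℂ = ∫ s in Δ, g s ∂ν) →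
    ⟪ξ, ((ContinuousLinearMap.adjoint V).comp (R.comp ((π x).comp V))) η⟫_ℂ
      = ∫ s, f s * g s ∂ν

end CPMeasure

set_option linter.unusedSectionVars false
set_option maxHeartbeats 1000000

section AuxLemmas

variable {X : Type*} [NormedRing X] [StarRing X] [CStarRing X]
  [NormedAlgebra ℂ X] [StarModule ℂ X]
variable {H : Type*} [NormedAddCommGroup H] [InnerProductSpace ℂ H] [CompleteSpace H]

lemma cp_star_mul {T : X → (H →L[ℂ] H)} (hT : CompletelyPositiveFun T) (c : X) :
    ∃ b : H →L[ℂ] H, T (star c * c) = star b * b := by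
  have hM : MatPos (Matrix.of ![![star c * c]]) := by
    refine ⟨Matrix.of ![![c]], ?_⟩
    ext i j
    fin_cases i; fin_cases j
    simp [Matrix.mul_apply, Matrix.conjTranspose_apply, Fin.sum_univ_one]
  obtain ⟨N, hN⟩ := hT 1 _ hM
  refine ⟨N 0 0, ?_⟩
  have := congrFun (congrFun hN 0) 0
  simpa [Matrix.mul_apply, Matrix.conjTranspose_apply, Fin.sum_univ_one, Matrix.map_apply] using this

lemma star_mul_inner (b : H →L[ℂ] H) (ζ : H) :
    ⟪ζ, (star b * b) ζ⟫_ℂ = ((‖b ζ‖ : ℂ)) ^ 2 := by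
  rw [ContinuousLinearMap.mul_apply, ContinuousLinearMap.star_eq_adjoint,
    ContinuousLinearMap.adjoint_inner_right, inner_self_eq_norm_sq_to_K]
  norm_cast

lemma star_mul_add_eq_zero {a b : H →L[ℂ] H} (h : star a * a + star b * b = 0) : a = 0 := by
  ext ζ
  have h1 : ⟪ζ, (star a * a + star b * b) ζ⟫_ℂ = 0 := by rw [h]; simp
  rw [ContinuousLinearMap.add_apply, inner_add_right, star_mul_inner, star_mul_inner] at h1
  have h2 : (‖a ζ‖ : ℝ) ^ 2 + (‖b ζ‖ : ℝ) ^ 2 = 0 := by exact_mod_cast h1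
  have : ‖a ζ‖ = 0 := by nlinarith [sq_nonneg ‖a ζ‖, sq_nonneg ‖b ζ‖, norm_nonneg (a ζ), norm_nonneg (b ζ)]
  simpa using this

lemma cp_one_zero {T : X → (H →L[ℂ] H)} (hT : CompletelyPositiveFun T) (h1 : T 1 = 0)
    (x : X) : T x = 0 := by
  have hM : MatPos (Matrix.of ![![(1 : X), x], ![star x, star x * x]]) := by
    refine ⟨Matrix.of ![![(1 : X), x], ![0, 0]], ?_⟩
    ext i j
    fin_cases i <;> fin_cases j <;>
      simp [Matrix.mul_apply, Matrix.conjTranspose_apply, Fin.sum_univ_two]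
  obtain ⟨B, hB⟩ := hT 2 _ hM
  have h00 := congrFun (congrFun hB 0) 0
  have h01 := congrFun (congrFun hB 0) 1
  simp only [Matrix.map_apply, Matrix.mul_apply, Matrix.conjTranspose_apply,
    Fin.sum_univ_two, Matrix.of_apply, Matrix.cons_val', Matrix.cons_val_zero,
    Matrix.cons_val_one, Matrix.head_cons, Matrix.empty_val', Matrix.cons_val_fin_one,
    Matrix.head_fin_const] at h00 h01
  rw [h1] at h00
  have hB00 : B 0 0 = 0 := star_mul_add_eq_zero h00.symm
  have hB10 : B 1 0 = 0 := by
    apply star_mul_add_eq_zero (a := B 1 0) (b := B 0 0)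
    rw [hB00] at h00 ⊢
    simpa [add_comm] using h00.symm
  rw [h01, hB00, hB10]
  simp


section Aux

variable {S : Type*} [MeasurableSpace S]
variable {K : Type*} [NormedAddCommGroup K] [InnerProductSpace ℂ K] [CompleteSpace K]

lemma mu_null (M : VonNeumannAlgebra H) {μ : Set S → X → (H →L[ℂ] H)}
    (hμ : IsCPMeasure M μ) {e : ℕ → H} (hρ : IsNormalFaithfulStateOn M e)
    {ν : Measure S} (hν : IsEquivalentBaseMeasure μ e ν)
    {Δ : Set S} (hΔ : MeasurableSet Δ) (h0 : ν Δ = 0) (x : X) : μ Δ x = 0 := by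
  obtain ⟨hlin, hcp, hmem⟩ := hμ.1 Δ hΔ
  -- μ Δ 1 is positive
  obtain ⟨b, hb⟩ := cp_star_mul hcp 1
  rw [star_one, one_mul] at hb
  have hpos : (μ Δ 1).IsPositive := by
    rw [hb]
    refine ⟨(IsSelfAdjoint.star_mul_self b).isSymmetric, fun ζ => ?_⟩
    have : ⟪(star b * b) ζ, ζ⟫_ℂ = ((‖b ζ‖ : ℂ)) ^ 2 := by
      rw [← inner_conj_symm, star_mul_inner]
      norm_cast
      rw [Complex.conj_ofReal]
    rw [ContinuousLinearMap.reApplyInnerSelf, this]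
    rw [RCLike.re_to_complex, ← Complex.ofReal_pow, Complex.ofReal_re]
    positivity
  have hzero : μ Δ 1 = 0 := hρ.2 _ (hmem 1) hpos ((hν Δ hΔ).1 h0)
  exact cp_one_zero hcp hzero x

lemma mu_empty (M : VonNeumannAlgebra H) {μ : Set S → X → (H →L[ℂ] H)}
    (hμ : IsCPMeasure M μ) {e : ℕ → H} (hρ : IsNormalFaithfulStateOn M e)
    {ν : Measure S} (hν : IsEquivalentBaseMeasure μ e ν) (x : X) : μ ∅ x = 0 :=
  mu_null M hμ hρ hν MeasurableSet.empty (measure_empty) x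

lemma mu_union (M : VonNeumannAlgebra H) {μ : Set S → X → (H →L[ℂ] H)}
    (hμ : IsCPMeasure M μ) {e : ℕ → H} (hρ : IsNormalFaithfulStateOn M e)
    {ν : Measure S} (hν : IsEquivalentBaseMeasure μ e ν)
    {A B : Set S} (hA : MeasurableSet A) (hB : MeasurableSet B) (hAB : Disjoint A B)
    (x : X) (ξ η : H) :
    ⟪ξ, μ (A ∪ B) x η⟫_ℂ = ⟪ξ, μ A x η⟫_ℂ + ⟪ξ, μ B x η⟫_ℂ := by
  classical
  set Δ : ℕ → Set S := fun i => if i = 0 then A else if i = 1 then B else ∅ with hΔdef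
  have hmeas : ∀ i, MeasurableSet (Δ i) := by
    intro i
    simp only [hΔdef]
    split_ifs <;> first | exact hA | exact hB | exact MeasurableSet.empty
  have hpw : Pairwise (Function.onFun Disjoint Δ) := by
    intro i j hij
    simp only [Function.onFun, hΔdef]
    split_ifs <;>
      first
        | (exfalso; omega)
        | exact hAB
        | exact hAB.symm
        | exact Set.disjoint_empty _
        | exact Set.empty_disjoint _
  have hUnion : (⋃ i, Δ i) = A ∪ B := by
    apply subset_antisymm
    · apply Set.iUnion_subset
      intro i
      simp only [hΔdef]
      split_ifs
      · exact Set.subset_union_left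
      · exact Set.subset_union_right
      · exact Set.empty_subset _
    · apply Set.union_subset
      · exact le_trans (by simp [hΔdef]) (Set.subset_iUnion Δ 0)
      · exact le_trans (by simp [hΔdef]) (Set.subset_iUnion Δ 1)
  have htsum := hμ.2 Δ hmeas hpw x ξ η
  rw [hUnion] at htsum
  rw [htsum, tsum_eq_sum (s := {0, 1})]
  · simp [hΔdef]
  · intro i hi
    simp only [Finset.mem_insert, Finset.mem_singleton, not_or] at hi
    have : Δ i = ∅ := by simp [hΔdef, hi.1, hi.2]
    rw [this, mu_empty M hμ hρ hν x]
    simp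

lemma mu_inner_real (M : VonNeumannAlgebra H) {μ : Set S → X → (H →L[ℂ] H)}
    (hμ : IsCPMeasure M μ) {Δ : Set S} (hΔ : MeasurableSet Δ) (c : X) (ζ : H) :
    0 ≤ (⟪ζ, μ Δ (star c * c) ζ⟫_ℂ).re ∧
      ⟪ζ, μ Δ (star c * c) ζ⟫_ℂ = (((⟪ζ, μ Δ (star c * c) ζ⟫_ℂ).re : ℝ) : ℂ) := by
  obtain ⟨b, hb⟩ := cp_star_mul (hμ.1 Δ hΔ).2.1 c
  rw [hb, star_mul_inner]
  norm_cast
  simp [sq_nonneg]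

lemma exists_density_pos (M : VonNeumannAlgebra H) {μ : Set S → X → (H →L[ℂ] H)}
    (hμ : IsCPMeasure M μ) {e : ℕ → H} (hρ : IsNormalFaithfulStateOn M e)
    {ν : Measure S} [IsFiniteMeasure ν] (hν : IsEquivalentBaseMeasure μ e ν)
    (c : X) (ζ : H) :
    ∃ g : S → ℂ, Integrable g ν ∧ ∀ Δ : Set S, MeasurableSet Δ →
      ⟪ζ, μ Δ (star c * c) ζ⟫_ℂ = ∫ s in Δ, g s ∂ν := by
  classical
  set a : Set S → ℝ := fun Δ => (⟪ζ, μ Δ (star c * c) ζ⟫_ℂ).re with ha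
  have hreal : ∀ Δ : Set S, MeasurableSet Δ →
      0 ≤ a Δ ∧ ⟪ζ, μ Δ (star c * c) ζ⟫_ℂ = ((a Δ : ℝ) : ℂ) := fun Δ hΔ =>
    mu_inner_real M hμ hΔ c ζ
  have haempty : a ∅ = 0 := by
    simp [ha, mu_empty M hμ hρ hν]
  have hadd : ∀ {A B : Set S}, MeasurableSet A → MeasurableSet B → Disjoint A B →
      a (A ∪ B) = a A + a B := by
    intro A B hA hB hAB
    simp only [ha]
    rw [mu_union M hμ hρ hν hA hB hAB, Complex.add_re]
  have hmono : ∀ {A B : Set S}, MeasurableSet A → MeasurableSet B → A ⊆ B → a A ≤ a B := by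
    intro A B hA hB hsub
    have h1 : B = A ∪ (B \ A) := by
      rw [Set.union_diff_cancel hsub]
    rw [h1, hadd hA (hB.diff hA) Set.disjoint_sdiff_right]
    have := (hreal _ (hB.diff hA)).1
    linarith
  -- the measure
  have hm0 : ENNReal.ofReal (a ∅) = 0 := by rw [haempty]; simp
  set m : Measure S := Measure.ofMeasurable (fun Δ _ => ENNReal.ofReal (a Δ)) hm0
    (by
      intro Δ hmeas hpw
      have hUm : MeasurableSet (⋃ i, Δ i) := MeasurableSet.iUnion hmeas
      have hpartial : ∀ n : ℕ,
          ∑ i ∈ Finset.range n, a (Δ i) = a (⋃ i, ⋃ (_ : i < n), Δ i) := by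
        intro n
        induction n with
        | zero => simp [haempty]
        | succ n ih =>
          have hUn : MeasurableSet (⋃ i, ⋃ (_ : i < n), Δ i) :=
            MeasurableSet.iUnion fun i => MeasurableSet.iUnion fun _ => hmeas i
          have hdisj : Disjoint (⋃ i, ⋃ (_ : i < n), Δ i) (Δ n) := by
            rw [Set.disjoint_iUnion_left]
            intro i
            rw [Set.disjoint_iUnion_left]
            intro hi
            exact hpw (Nat.ne_of_lt hi)
          have hstep : (⋃ i, ⋃ (_ : i < n + 1), Δ i)
              = (⋃ i, ⋃ (_ : i < n), Δ i) ∪ Δ n := by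
            apply subset_antisymm
            · apply Set.iUnion_subset; intro i; apply Set.iUnion_subset; intro hi
              rcases Nat.lt_or_ge i n with h | h
              · exact fun x hx => Or.inl (Set.mem_iUnion₂.mpr ⟨i, h, hx⟩)
              · have : i = n := by omega
                subst this
                exact fun x hx => Or.inr hx
            · apply Set.union_subset
              · apply Set.iUnion_subset; intro i; apply Set.iUnion_subset; intro hi
                exact fun x hx => Set.mem_iUnion₂.mpr ⟨i, Nat.lt_succ_of_lt hi, hx⟩
              · exact fun x hx => Set.mem_iUnion₂.mpr ⟨n, Nat.lt_succ_self n, hx⟩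
          rw [Finset.sum_range_succ, ih, hstep, hadd hUn (hmeas n) hdisj]
      have hbdd : ∀ n : ℕ, ∑ i ∈ Finset.range n, a (Δ i) ≤ a (⋃ i, Δ i) := by
        intro n
        rw [hpartial n]
        refine hmono (MeasurableSet.iUnion fun i => MeasurableSet.iUnion fun _ => hmeas i)
          hUm ?_
        apply Set.iUnion_subset; intro i; apply Set.iUnion_subset; intro _
        exact Set.subset_iUnion Δ i
      have hsummable : Summable (fun i => a (Δ i)) :=
        summable_of_sum_range_le (fun i => (hreal _ (hmeas i)).1) hbdd
      have htsum := hμ.2 Δ hmeas hpw (star c * c) ζ ζ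
      have hcast : (a (⋃ i, Δ i) : ℂ) = ((∑' i, a (Δ i) : ℝ) : ℂ) := by
        rw [← (hreal _ hUm).2, htsum, Complex.ofReal_tsum]
        congr 1
        funext i
        exact (hreal _ (hmeas i)).2
      have haU : a (⋃ i, Δ i) = ∑' i, a (Δ i) := by exact_mod_cast hcast
      show ENNReal.ofReal (a (⋃ i, Δ i)) = ∑' i, ENNReal.ofReal (a (Δ i))
      rw [haU, ENNReal.ofReal_tsum_of_nonneg (fun i => (hreal _ (hmeas i)).1) hsummable])
    with hmdef
  have hm : ∀ Δ : Set S, MeasurableSet Δ → m Δ = ENNReal.ofReal (a Δ) := by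
    intro Δ hΔ
    exact Measure.ofMeasurable_apply Δ hΔ
  haveI : IsFiniteMeasure m := by
    constructor
    rw [hm Set.univ MeasurableSet.univ]
    exact ENNReal.ofReal_lt_top
  have hac : m ≪ ν := by
    refine Measure.AbsolutelyContinuous.mk ?_
    intro t ht h0
    rw [hm t ht]
    have : μ t (star c * c) = 0 := mu_null M hμ hρ hν ht h0 _
    simp [ha, this]
  refine ⟨fun s => ((m.rnDeriv ν s).toReal : ℂ), (Measure.integrable_toReal_rnDeriv).ofReal, ?_⟩
  intro Δ hΔ
  show ⟪ζ, μ Δ (star c * c) ζ⟫_ℂ = ∫ s in Δ, (((m.rnDeriv ν s).toReal : ℝ) : ℂ) ∂ν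
  have hio : ∫ s in Δ, (((m.rnDeriv ν s).toReal : ℝ) : ℂ) ∂ν
      = ((∫ s in Δ, (m.rnDeriv ν s).toReal ∂ν : ℝ) : ℂ) :=
    integral_ofReal (𝕜 := ℂ)
  rw [hio, Measure.setIntegral_toReal_rnDeriv hac Δ, measureReal_def, hm Δ hΔ,
    ENNReal.toReal_ofReal (hreal Δ hΔ).1]
  exact (hreal Δ hΔ).2

lemma expand0 (a : ℂ) (x : X) : star (x + a • 1) * (x + a • 1)
    = star x * x + a • star x + (starRingEnd ℂ a) • x + (a * starRingEnd ℂ a) • (1 : X) := by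
  rw [star_add, star_smul, star_one, RCLike.star_def, add_mul, mul_add, mul_add]
  simp only [smul_mul_assoc, mul_smul_comm, mul_one, one_mul, smul_smul]
  abel

lemma x_decomp (j : ℂ) (hj : j * j = -1) (hconj : (starRingEnd ℂ) j = -j) (x : X) :
    (star (x + 1) * (x + 1)) - (star (x - 1) * (x - 1))
      + j • (star (x + j • 1) * (x + j • 1)) - j • (star (x - j • 1) * (x - j • 1))
      = (4 : ℂ) • x := by
  have e0 : x + (1:X) = x + (1:ℂ) • 1 := by simp
  have e1 := expand0 1 x
  rw [← e0] at e1
  have e2 := expand0 (-1) x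
  have e3 := expand0 j x
  have e4 := expand0 (-j) x
  simp only [map_one, map_neg, hconj, one_smul, neg_neg, neg_smul, mul_one, one_mul,
    mul_neg, neg_mul] at e1 e2 e3 e4
  simp only [sub_eq_add_neg]
  rw [e1, e2, e3, e4]
  match_scalars <;>
    first
      | ring1
      | linear_combination (2 : ℂ) * hj
      | linear_combination (-2 : ℂ) * hj
      | linear_combination j * hj
      | linear_combination (-j) * hj
      | linear_combination (2 * j) * hj
      | linear_combination (-2 * j) * hj

lemma inner_polar (j : ℂ) (hj : j * j = -1) (hconj : (starRingEnd ℂ) j = -j)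
    (A : H →L[ℂ] H) (ξ η : H) :
    ⟪η + ξ, A (η + ξ)⟫_ℂ - ⟪η - ξ, A (η - ξ)⟫_ℂ
      + j * ⟪η + j • ξ, A (η + j • ξ)⟫_ℂ - j * ⟪η - j • ξ, A (η - j • ξ)⟫_ℂ
      = 4 * ⟪ξ, A η⟫_ℂ := by
  simp only [map_add, map_sub, ContinuousLinearMap.map_smul, inner_add_left, inner_add_right, inner_sub_left,
    inner_sub_right, inner_smul_left, inner_smul_right, hconj]
  first
    | linear_combination (2 * ⟪η, A ξ⟫_ℂ - 2 * ⟪ξ, A η⟫_ℂ) * hj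
    | linear_combination (2 * ⟪ξ, A η⟫_ℂ - 2 * ⟪η, A ξ⟫_ℂ) * hj
    | linear_combination (2 * ⟪η, A ξ⟫_ℂ + 2 * ⟪ξ, A η⟫_ℂ) * hj
    | linear_combination (-2 * ⟪η, A ξ⟫_ℂ - 2 * ⟪ξ, A η⟫_ℂ) * hj

lemma exists_density (M : VonNeumannAlgebra H) {μ : Set S → X → (H →L[ℂ] H)}
    (hμ : IsCPMeasure M μ) {e : ℕ → H} (hρ : IsNormalFaithfulStateOn M e)
    {ν : Measure S} [IsFiniteMeasure ν] (hν : IsEquivalentBaseMeasure μ e ν)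
    (x : X) (ξ η : H) :
    ∃ g : S → ℂ, Integrable g ν ∧ ∀ Δ : Set S, MeasurableSet Δ →
      ⟪ξ, μ Δ x η⟫_ℂ = ∫ s in Δ, g s ∂ν := by
  classical
  set j : ℂ := Complex.I with hjdef
  have hj : j * j = -1 := Complex.I_mul_I
  have hconj : (starRingEnd ℂ) j = -j := Complex.conj_I
  set c : Fin 4 → X := ![x + 1, x - 1, x + j • 1, x - j • 1] with hc
  set ζ : Fin 4 → H := ![η + ξ, η - ξ, η + j • ξ, η - j • ξ] with hζ
  have hgex : ∀ i k : Fin 4, ∃ g : S → ℂ, Integrable g ν ∧ ∀ Δ : Set S, MeasurableSet Δ →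
      ⟪ζ k, μ Δ (star (c i) * c i) (ζ k)⟫_ℂ = ∫ s in Δ, g s ∂ν :=
    fun i k => exists_density_pos M hμ hρ hν (c i) (ζ k)
  choose g hg1 hg2 using hgex
  set d : Fin 4 → ℂ := ![1, -1, j, -j] with hd
  refine ⟨fun s => ∑ i : Fin 4, ∑ k : Fin 4, ((16 : ℂ)⁻¹ * (d i * d k)) * g i k s, ?_, ?_⟩
  · apply integrable_finset_sum
    intro i _
    apply integrable_finset_sum
    intro k _
    exact (hg1 i k).const_mul _
  intro Δ hΔ
  have hlin := (hμ.1 Δ hΔ).1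
  -- decomposition of x
  have hxd := x_decomp j hj hconj x
  have hmu : μ Δ x = (4 : ℂ)⁻¹ • (μ Δ (star (c 0) * c 0) - μ Δ (star (c 1) * c 1)
      + j • μ Δ (star (c 2) * c 2) - j • μ Δ (star (c 3) * c 3)) := by
    have h4 : x = (4 : ℂ)⁻¹ • ((star (c 0) * c 0) - (star (c 1) * c 1)
        + j • (star (c 2) * c 2) - j • (star (c 3) * c 3)) := by
      rw [hc]
      simp only [Matrix.cons_val_zero, Matrix.cons_val_one, Matrix.head_cons,
        Matrix.cons_val_two, Matrix.tail_cons, Matrix.cons_val_three]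
      rw [hxd]
      rw [smul_smul]
      norm_num
    calc μ Δ x = μ Δ ((4 : ℂ)⁻¹ • ((star (c 0) * c 0) - (star (c 1) * c 1)
        + j • (star (c 2) * c 2) - j • (star (c 3) * c 3))) := by rw [← h4]
    _ = _ := by
        rw [hlin.map_smul]
        congr 1
        rw [hlin.map_sub, hlin.map_add, hlin.map_sub, hlin.map_smul, hlin.map_smul]
  -- vector polarization for each operator
  have hpol : ∀ i : Fin 4, ⟪ξ, μ Δ (star (c i) * c i) η⟫_ℂ
      = (4 : ℂ)⁻¹ * (⟪ζ 0, μ Δ (star (c i) * c i) (ζ 0)⟫_ℂ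
        - ⟪ζ 1, μ Δ (star (c i) * c i) (ζ 1)⟫_ℂ
        + j * ⟪ζ 2, μ Δ (star (c i) * c i) (ζ 2)⟫_ℂ
        - j * ⟪ζ 3, μ Δ (star (c i) * c i) (ζ 3)⟫_ℂ) := by
    intro i
    have := inner_polar j hj hconj (μ Δ (star (c i) * c i)) ξ η
    rw [hζ]
    simp only [Matrix.cons_val_zero, Matrix.cons_val_one, Matrix.head_cons,
      Matrix.cons_val_two, Matrix.tail_cons, Matrix.cons_val_three]
    rw [this]
    ring
  -- put it together
  have hint : ∫ s in Δ, (∑ i : Fin 4, ∑ k : Fin 4, ((16 : ℂ)⁻¹ * (d i * d k)) * g i k s) ∂ν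
      = ∑ i : Fin 4, ∑ k : Fin 4, ((16 : ℂ)⁻¹ * (d i * d k)) * ∫ s in Δ, g i k s ∂ν := by
    rw [integral_finset_sum]
    · apply Finset.sum_congr rfl
      intro i _
      rw [integral_finset_sum]
      · apply Finset.sum_congr rfl
        intro k _
        exact MeasureTheory.integral_const_mul _ _
      · intro k _
        exact ((hg1 i k).const_mul _).restrict
    · intro i _
      apply integrable_finset_sum
      intro k _
      exact ((hg1 i k).const_mul _).restrict
  rw [hint]
  have hQ : ∀ i k : Fin 4, ∫ s in Δ, g i k s ∂ν
      = ⟪ζ k, μ Δ (star (c i) * c i) (ζ k)⟫_ℂ := fun i k => (hg2 i k Δ hΔ).symm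
  simp only [hQ]
  rw [hmu]
  simp only [ContinuousLinearMap.smul_apply, ContinuousLinearMap.sub_apply,
    ContinuousLinearMap.add_apply, inner_smul_right, inner_sub_right, inner_add_right]
  rw [hpol 0, hpol 1, hpol 2, hpol 3]
  simp only [Fin.sum_univ_four, hd, Matrix.cons_val_zero, Matrix.cons_val_one,
    Matrix.head_cons, Matrix.cons_val_two, Matrix.tail_cons, Matrix.cons_val_three]
  push_cast
  ring

lemma clm_ext_inner {A B : H →L[ℂ] H} (h : ∀ ξ η : H, ⟪ξ, A η⟫_ℂ = ⟪ξ, B η⟫_ℂ) :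
    A = B := by
  ext η
  exact ext_inner_left ℂ (fun ξ => h ξ η)

lemma minimal_kill (π : X →⋆ₐ[ℂ] (K →L[ℂ] K)) (V : H →L[ℂ] K)
    (hmin : IsMinimalStinespring π V) (A : K →L[ℂ] K)
    (hcomm : ∀ x : X, A * π x = π x * A)
    (h0 : ∀ (x : X) (ξ η : H), ⟪V ξ, A ((π x) (V η))⟫_ℂ = 0) : A = 0 := by
  have hAV : ∀ η : H, A (V η) = 0 := by
    intro η
    have hmem : A (V η) ∈ (Submodule.span ℂ {k : K | ∃ (x : X) (h : H), k = π x (V h)})ᗮ := by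
      rw [Submodule.mem_orthogonal]
      intro u hu
      induction hu using Submodule.span_induction with
      | mem u hu =>
        obtain ⟨x, h, rfl⟩ := hu
        have hadj : ContinuousLinearMap.adjoint (π x) = π (star x) := by
          rw [← ContinuousLinearMap.star_eq_adjoint, ← map_star]
        calc ⟪π x (V h), A (V η)⟫_ℂ
            = ⟪V h, ContinuousLinearMap.adjoint (π x) (A (V η))⟫_ℂ := by
              rw [ContinuousLinearMap.adjoint_inner_right]
        _ = ⟪V h, (π (star x) * A) (V η)⟫_ℂ := by rw [hadj]; rfl
        _ = ⟪V h, A ((π (star x)) (V η))⟫_ℂ := by rw [← hcomm (star x)]; rfl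
        _ = 0 := h0 (star x) h η
      | zero => simp
      | add u v _ _ hu hv => rw [inner_add_left, hu, hv, add_zero]
      | smul a u _ hu => rw [inner_smul_left, hu, mul_zero]
    have horth : (Submodule.span ℂ {k : K | ∃ (x : X) (h : H), k = π x (V h)})ᗮ = ⊥ := by
      rw [← Submodule.topologicalClosure_eq_top_iff]
      exact hmin
    rw [horth] at hmem
    exact hmem
  have hker : (Submodule.span ℂ {k : K | ∃ (x : X) (h : H), k = π x (V h)})
      ≤ LinearMap.ker (A : K →ₗ[ℂ] K) := by
    rw [Submodule.span_le]
    rintro u ⟨x, h, rfl⟩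
    simp only [SetLike.mem_coe, LinearMap.mem_ker, ContinuousLinearMap.coe_coe]
    have : (A * π x) (V h) = (π x * A) (V h) := by rw [hcomm]
    simp only [ContinuousLinearMap.mul_apply] at this
    rw [this, hAV, map_zero]
  have htop : (⊤ : Submodule ℂ K) ≤ LinearMap.ker (A : K →ₗ[ℂ] K) := by
    rw [← hmin]
    exact Submodule.topologicalClosure_minimal _ hker (ContinuousLinearMap.isClosed_ker A)
  ext k
  have : k ∈ LinearMap.ker (A : K →ₗ[ℂ] K) := htop trivial
  simpa using this

end Aux

end AuxLemmas



/-- Conversely, if `κ_μ` is a *-homomorphism, then for every measurable `Δ` the maps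
`μ(Δ)` and `μ(Δᶜ)` are orthogonal: `κ_μ(χ_Δ)` and `κ_μ(χ_{Δᶜ})` are mutually
orthogonal projections summing to the identity, implementing `μ(Δ)` and `μ(Δᶜ)`. -/
theorem orthogonal_of_kappa_star_hom
    {X : Type*} [NormedRing X] [StarRing X] [CStarRing X]
    [NormedAlgebra ℂ X] [StarModule ℂ X]
    {H K : Type*} [NormedAddCommGroup H] [InnerProductSpace ℂ H] [CompleteSpace H]
    [NormedAddCommGroup K] [InnerProductSpace ℂ K] [CompleteSpace K]
    {S : Type*} [MeasurableSpace S]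
    (M : VonNeumannAlgebra H) (μ : Set S → X → (H →L[ℂ] H))
    (hμ : IsCPMeasure M μ)
    (e : ℕ → H) (hρ : IsNormalFaithfulStateOn M e)
    (ν : MeasureTheory.Measure S) [MeasureTheory.IsFiniteMeasure ν]
    (hν : IsEquivalentBaseMeasure μ e ν)
    (π : X →⋆ₐ[ℂ] (K →L[ℂ] K)) (V : H →L[ℂ] K)
    (hst : IsStinespring (μ Set.univ) π V) (hmin : IsMinimalStinespring π V)
    (κ : (S → ℂ) → (K →L[ℂ] K))
    (hκ : ∀ f : S → ℂ, Measurable f → (∃ C : ℝ, ∀ s, ‖f s‖ ≤ C) →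
      (∀ x : X, κ f * π x = π x * κ f) ∧ IsKappa μ ν π V f (κ f))
    (hmul : ∀ f g : S → ℂ, Measurable f → (∃ C : ℝ, ∀ s, ‖f s‖ ≤ C) →
      Measurable g → (∃ C : ℝ, ∀ s, ‖g s‖ ≤ C) →
      κ (fun s => f s * g s) = κ f * κ g)
    (hstar : ∀ f : S → ℂ, Measurable f → (∃ C : ℝ, ∀ s, ‖f s‖ ≤ C) →
      κ (fun s => star (f s)) = ContinuousLinearMap.adjoint (κ f)) :
    ∀ Δ : Set S, MeasurableSet Δ →
      IsIdempotentElem (κ (Set.indicator Δ (fun _ => (1 : ℂ)))) ∧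
      IsSelfAdjoint (κ (Set.indicator Δ (fun _ => (1 : ℂ)))) ∧
      IsIdempotentElem (κ (Set.indicator Δᶜ (fun _ => (1 : ℂ)))) ∧
      IsSelfAdjoint (κ (Set.indicator Δᶜ (fun _ => (1 : ℂ)))) ∧
      κ (Set.indicator Δ (fun _ => (1 : ℂ))) * κ (Set.indicator Δᶜ (fun _ => (1 : ℂ))) = 0 ∧
      κ (Set.indicator Δ (fun _ => (1 : ℂ))) + κ (Set.indicator Δᶜ (fun _ => (1 : ℂ))) = 1 ∧
      (∀ x : X, μ Δ x = (ContinuousLinearMap.adjoint V).comp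
        ((κ (Set.indicator Δ (fun _ => (1 : ℂ)))).comp ((π x).comp V))) ∧
      (∀ x : X, μ Δᶜ x = (ContinuousLinearMap.adjoint V).comp
        ((κ (Set.indicator Δᶜ (fun _ => (1 : ℂ)))).comp ((π x).comp V))) := by
  intro Δ hΔ
  classical
  -- basic facts about indicators
  have hmχ : ∀ T : Set S, MeasurableSet T → Measurable (Set.indicator T (fun _ => (1 : ℂ))) :=
    fun T hT => measurable_const.indicator hT
  have hbχ : ∀ T : Set S, ∃ C : ℝ, ∀ s, ‖Set.indicator T (fun _ => (1 : ℂ)) s‖ ≤ C := by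
    intro T
    refine ⟨1, fun s => ?_⟩
    by_cases h : s ∈ T <;> simp [Set.indicator_of_mem, Set.indicator_of_notMem, h]
  have hidem : ∀ T : Set S, MeasurableSet T →
      IsIdempotentElem (κ (Set.indicator T (fun _ => (1 : ℂ)))) := by
    intro T hT
    have h2 : (fun s => Set.indicator T (fun _ => (1 : ℂ)) s * Set.indicator T (fun _ => (1 : ℂ)) s)
        = Set.indicator T (fun _ => (1 : ℂ)) := by
      funext s
      by_cases h : s ∈ T <;> simp [Set.indicator_of_mem, Set.indicator_of_notMem, h]
    rw [IsIdempotentElem, ← hmul _ _ (hmχ T hT) (hbχ T) (hmχ T hT) (hbχ T), h2]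
  have hsa : ∀ T : Set S, MeasurableSet T →
      IsSelfAdjoint (κ (Set.indicator T (fun _ => (1 : ℂ)))) := by
    intro T hT
    have h1 : (fun s => star (Set.indicator T (fun _ => (1 : ℂ)) s))
        = Set.indicator T (fun _ => (1 : ℂ)) := by
      funext s
      by_cases h : s ∈ T <;> simp [Set.indicator_of_mem, Set.indicator_of_notMem, h]
    have := hstar _ (hmχ T hT) (hbχ T)
    rw [h1] at this
    rw [IsSelfAdjoint, ContinuousLinearMap.star_eq_adjoint, ← this]
  -- the weak formula unpacking
  have hVadj : ∀ (R : K →L[ℂ] K) (x : X) (ξ η : H),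
      ⟪ξ, ((ContinuousLinearMap.adjoint V).comp (R.comp ((π x).comp V))) η⟫_ℂ
        = ⟪V ξ, R ((π x) (V η))⟫_ℂ := by
    intro R x ξ η
    simp only [ContinuousLinearMap.comp_apply]
    rw [ContinuousLinearMap.adjoint_inner_right]
  -- the indicator integral identity
  have hind : ∀ (T : Set S) (hT : MeasurableSet T) (g : S → ℂ),
      ∫ s, Set.indicator T (fun _ => (1 : ℂ)) s * g s ∂ν = ∫ s in T, g s ∂ν := by
    intro T hT g
    have h3 : (fun s => Set.indicator T (fun _ => (1 : ℂ)) s * g s) = T.indicator g := by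
      funext s
      by_cases h : s ∈ T <;> simp [Set.indicator_of_mem, Set.indicator_of_notMem, h]
    rw [h3, MeasureTheory.integral_indicator hT]
  -- κ of the zero function is zero
  obtain ⟨hcomm0, hkap0⟩ := hκ (fun _ => (0 : ℂ)) measurable_const ⟨0, by simp⟩
  have hκ0 : κ (fun _ => (0 : ℂ)) = 0 := by
    apply minimal_kill π V hmin _ hcomm0
    intro x ξ η
    obtain ⟨g, hgint, hgrep⟩ := exists_density M hμ hρ hν x ξ η
    have h4 := hkap0 x ξ η g hgint hgrep
    rw [hVadj] at h4
    simpa using h4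
  obtain ⟨hcommΔ, hkapΔ⟩ := hκ _ (hmχ Δ hΔ) (hbχ Δ)
  obtain ⟨hcommΔc, hkapΔc⟩ := hκ _ (hmχ Δᶜ hΔ.compl) (hbχ Δᶜ)
  -- orthogonality of the two projections
  have hprod : κ (Set.indicator Δ (fun _ => (1 : ℂ))) * κ (Set.indicator Δᶜ (fun _ => (1 : ℂ))) = 0 := by
    rw [← hmul _ _ (hmχ Δ hΔ) (hbχ Δ) (hmχ Δᶜ hΔ.compl) (hbχ Δᶜ)]
    have h5 : (fun s => Set.indicator Δ (fun _ => (1 : ℂ)) s * Set.indicator Δᶜ (fun _ => (1 : ℂ)) s)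
        = fun _ => (0 : ℂ) := by
      funext s
      by_cases h : s ∈ Δ
      · simp [Set.indicator_of_mem, Set.indicator_of_notMem, h]
      · simp [Set.indicator_of_mem, Set.indicator_of_notMem, h]
    rw [h5, hκ0]
  -- sum is one
  have hsum : κ (Set.indicator Δ (fun _ => (1 : ℂ))) + κ (Set.indicator Δᶜ (fun _ => (1 : ℂ))) = 1 := by
    have hA : κ (Set.indicator Δ (fun _ => (1 : ℂ))) + κ (Set.indicator Δᶜ (fun _ => (1 : ℂ))) - 1 = 0 := by
      apply minimal_kill π V hmin _ ?_ ?_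
      · intro x
        rw [sub_mul, add_mul, mul_sub, mul_add, hcommΔ x, hcommΔc x, one_mul, mul_one]
      · intro x ξ η
        obtain ⟨g, hgint, hgrep⟩ := exists_density M hμ hρ hν x ξ η
        have h6 := hkapΔ x ξ η g hgint hgrep
        have h7 := hkapΔc x ξ η g hgint hgrep
        rw [hVadj, hind Δ hΔ g] at h6
        rw [hVadj, hind Δᶜ hΔ.compl g] at h7
        have h8 : ⟪V ξ, (π x) (V η)⟫_ℂ = ∫ s, g s ∂ν := by
          have h9 : ⟪ξ, μ Set.univ x η⟫_ℂ = ⟪V ξ, (π x) (V η)⟫_ℂ := by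
            rw [hst x]
            simp only [ContinuousLinearMap.comp_apply]
            rw [ContinuousLinearMap.adjoint_inner_right]
          rw [← h9, hgrep Set.univ MeasurableSet.univ, Measure.restrict_univ]
        have h10 : (∫ s in Δ, g s ∂ν) + ∫ s in Δᶜ, g s ∂ν = ∫ s, g s ∂ν :=
          MeasureTheory.integral_add_compl hΔ hgint
        simp only [ContinuousLinearMap.sub_apply, ContinuousLinearMap.add_apply,
          ContinuousLinearMap.one_apply, inner_sub_right, inner_add_right]
        rw [h6, h7, h8, h10]
        ring
    have := sub_eq_zero.mp hA
    simpa using this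
  -- implementing identities
  have himpΔ : ∀ x : X, μ Δ x = (ContinuousLinearMap.adjoint V).comp
      ((κ (Set.indicator Δ (fun _ => (1 : ℂ)))).comp ((π x).comp V)) := by
    intro x
    apply clm_ext_inner
    intro ξ η
    obtain ⟨g, hgint, hgrep⟩ := exists_density M hμ hρ hν x ξ η
    have h11 := hkapΔ x ξ η g hgint hgrep
    rw [hind Δ hΔ g] at h11
    exact (hgrep Δ hΔ).trans h11.symm
  have himpΔc : ∀ x : X, μ Δᶜ x = (ContinuousLinearMap.adjoint V).comp
      ((κ (Set.indicator Δᶜ (fun _ => (1 : ℂ)))).comp ((π x).comp V)) := by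
    intro x
    apply clm_ext_inner
    intro ξ η
    obtain ⟨g, hgint, hgrep⟩ := exists_density M hμ hρ hν x ξ η
    have h12 := hkapΔc x ξ η g hgint hgrep
    rw [hind Δᶜ hΔ.compl g] at h12
    exact (hgrep Δᶜ hΔ.compl).trans h12.symm
  exact ⟨hidem Δ hΔ, hsa Δ hΔ, hidem Δᶜ hΔ.compl, hsa Δᶜ hΔ.compl, hprod, hsum, himpΔ, himpΔc⟩
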